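/- Let X₁, X₂, … (indexed by n ≥ 1) be a sequence of pairwise disjoint nonempty sets, all subsets of a type α, and let 0 be a point not belonging to any Xₙ. For each n let Yₙ = Xₙ ∪ {0}, endowed with the discrete topology, and give Y = ∏ₙ Yₙ the product topology. For x ∈ Xₙ define U_x = {y ∈ Y : yᵢ = 0 for all i < n, and yₙ = x}. Then the family {U_x : x ∈ ⋃ₙ Xₙ} consists of nonempty open subsets of Y that are pairwise disjoint, and the map x ↦ U_x is injective; hence this family has the same cardinality as ⋃ₙ Xₙ. -/
import Mathlib


open Cardinal Set

universe u

/-- The product `Y = ∏ₙ Yₙ` where `Yₙ = Xₙ ∪ {z}`; each factor is a subspace of the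
discrete space `α` (hence discrete), and the product carries the product topology. -/
abbrev SocksProd {α : Type u} (X : ℕ → Set α) (z : α) : Type u :=
  ∀ n : ℕ, ↥(insert z (X n))

/-- For `x ∈ Xₙ`, the basic open set `U_x = {y : yᵢ = z for i < n, and yₙ = x}`. -/
def SocksU {α : Type u} (X : ℕ → Set α) (z : α) (n : ℕ) (x : α) :
    Set (SocksProd X z) :=
  {y | (∀ i < n, (y i : α) = z) ∧ (y n : α) = x}

/-- Given a sequence of pairwise disjoint nonempty sets `Xₙ ⊆ α` and a point `z` in none
of them, the sets `U_x` (for `x ∈ ⋃ₙ Xₙ`) are nonempty open subsets of the product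
`∏ₙ (Xₙ ∪ {z})` of discrete spaces, pairwise disjoint, the assignment `x ↦ U_x` is
injective, and the family `{U_x : x ∈ ⋃ₙ Xₙ}` has the same cardinality as `⋃ₙ Xₙ`. -/
theorem socks_antichain_of_open_sets {α : Type u} [TopologicalSpace α] [DiscreteTopology α]
    (X : ℕ → Set α) (hdisj : Pairwise (Function.onFun Disjoint X))
    (hne : ∀ n, (X n).Nonempty) (z : α) (hz : z ∉ ⋃ n, X n) :
    (∀ n, ∀ x ∈ X n, IsOpen (SocksU X z n x) ∧ (SocksU X z n x).Nonempty) ∧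
    (∀ n m : ℕ, ∀ x ∈ X n, ∀ w ∈ X m, x ≠ w →
      Disjoint (SocksU X z n x) (SocksU X z m w)) ∧
    (∀ n m : ℕ, ∀ x ∈ X n, ∀ w ∈ X m, SocksU X z n x = SocksU X z m w → x = w) ∧
    #{S : Set (SocksProd X z) | ∃ n, ∃ x ∈ X n, S = SocksU X z n x} = #(⋃ n, X n) := by
  have hzX : ∀ n, z ∉ X n := fun n hn => hz (mem_iUnion.2 ⟨n, hn⟩)
  -- a canonical point of `U_x`
  have point : ∀ n x, x ∈ X n →
      ∃ y : SocksProd X z, (∀ i, i ≠ n → (y i : α) = z) ∧ (y n : α) = x := by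
    intro n x hx
    refine ⟨fun i => if h : i = n then ⟨x, by rw [h]; exact Set.mem_insert_iff.2 (Or.inr hx)⟩
      else ⟨z, Set.mem_insert _ _⟩, ?_, ?_⟩
    · intro i hi; simp [dif_neg hi]
    · simp
  -- openness
  have hopen : ∀ n x, IsOpen (SocksU X z n x) := by
    intro n x
    have : SocksU X z n x =
        (⋂ i ∈ Finset.range n, (fun y : SocksProd X z => y i) ⁻¹' {w | (w : α) = z}) ∩
          ((fun y : SocksProd X z => y n) ⁻¹' {w | (w : α) = x}) := by
      ext y
      simp [SocksU, Set.mem_iInter, Finset.mem_range]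
    rw [this]
    refine IsOpen.inter ?_ ?_
    · refine isOpen_biInter_finset fun i _ => ?_
      exact (isOpen_discrete _).preimage (continuous_apply i)
    · exact (isOpen_discrete _).preimage (continuous_apply n)
  -- nonemptiness
  have hnonempty : ∀ n x, x ∈ X n → (SocksU X z n x).Nonempty := by
    intro n x hx
    obtain ⟨y, hy1, hy2⟩ := point n x hx
    exact ⟨y, fun i hi => hy1 i hi.ne, hy2⟩
  -- injectivity
  have hinj : ∀ n m : ℕ, ∀ x ∈ X n, ∀ w ∈ X m,
      SocksU X z n x = SocksU X z m w → x = w := by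
    intro n m x hx w hw h
    obtain ⟨y, hy⟩ := hnonempty n x hx
    have hy' : y ∈ SocksU X z m w := h ▸ hy
    obtain ⟨y2, hy2⟩ := hnonempty m w hw
    have hy2' : y2 ∈ SocksU X z n x := h.symm ▸ hy2
    rcases lt_trichotomy n m with hnm | hnm | hnm
    · exfalso; apply hzX n
      have hxz : x = z := by rw [← hy.2]; exact hy'.1 n hnm
      rwa [hxz] at hx
    · rw [← hy.2, ← hy'.2, hnm]
    · exfalso; apply hzX m
      have hwz : w = z := by rw [← hy2.2]; exact hy2'.1 m hnm
      rwa [hwz] at hw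
  -- pairwise disjointness
  have hdisjU : ∀ n m : ℕ, ∀ x ∈ X n, ∀ w ∈ X m, x ≠ w →
      Disjoint (SocksU X z n x) (SocksU X z m w) := by
    intro n m x hx w hw hxw
    rw [Set.disjoint_left]
    rintro y ⟨h1, h2⟩ ⟨h3, h4⟩
    rcases lt_trichotomy n m with hnm | hnm | hnm
    · exact hzX n (by have : x = z := by rw [← h2]; exact h3 n hnm
                      rwa [this] at hx)
    · exact hxw (by rw [← h2, ← h4, hnm])
    · exact hzX m (by have : w = z := by rw [← h4]; exact h1 m hnm
                      rwa [this] at hw)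
  refine ⟨fun n x hx => ⟨hopen n x, hnonempty n x hx⟩, hdisjU, hinj, ?_⟩
  -- cardinality via a bijection from ⋃ₙ Xₙ
  have f : ∀ x : ↥(⋃ n, X n), ∃ n, (x : α) ∈ X n := fun x => mem_iUnion.1 x.2
  choose ix hix using f
  refine (Cardinal.mk_congr (Equiv.ofBijective
    (fun x : ↥(⋃ n, X n) =>
      (⟨SocksU X z (ix x) x, ⟨ix x, x, hix x, rfl⟩⟩ :
        {S : Set (SocksProd X z) | ∃ n, ∃ x ∈ X n, S = SocksU X z n x}))
    ⟨?_, ?_⟩)).symm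
  · intro a b hab
    have := hinj (ix a) (ix b) a (hix a) b (hix b) (congrArg Subtype.val hab)
    exact Subtype.ext this
  · rintro ⟨S, n, x, hx, rfl⟩
    refine ⟨⟨x, mem_iUnion.2 ⟨n, hx⟩⟩, ?_⟩
    have hn : ix ⟨x, mem_iUnion.2 ⟨n, hx⟩⟩ = n := by
      by_contra h
      exact absurd hx (Set.disjoint_left.1 (hdisj h) (hix _))
    simp [hn]
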